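/- Let b₁, b₂ ∈ C[0,1] with b₂(r) ≥ b₁(r) > 0 for all r ∈ (0,1). For i = 1,2 let u_i ∈ C¹[0,1] be such that r ↦ (−u_i'(r))^N is continuously differentiable on (0,1), ((−u_i')^N)'(r) = b_i(r) (u_i(r))^N for all r ∈ (0,1), and u_i'(0) = u_i(1) = 0. If u₁(r) ≠ 0 for all r ∈ (0,1), then either there exists τ ∈ (0,1) with u₂(τ) = 0, or b₂ = b₁ on (0,1) and u₂(r) = μ u₁(r) for some constant μ ≠ 0 and almost every r ∈ (0,1). -/

import Mathlib

open Set Filter Topology MeasureTheory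

lemma young_aux (N : ℕ) : ∀ a c : ℝ, 0 ≤ a → 0 ≤ c →
    ((N : ℝ) + 1) * (a * c ^ N) ≤ a ^ (N + 1) + N * c ^ (N + 1) := by
  induction N with
  | zero => intro a c ha hc; simp
  | succ n ih =>
    intro a c ha hc
    have h1 := ih a c ha hc
    have h2 : 0 ≤ (a - c) * (a ^ (n + 1) - c ^ (n + 1)) := by
      rcases le_total a c with h | h
      · have := pow_le_pow_left₀ ha h (n + 1)
        nlinarith
      · have := pow_le_pow_left₀ hc h (n + 1)
        nlinarith
    have e : a ^ (n + 1 + 1) + ((n : ℝ) + 1) * c ^ (n + 1 + 1)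
        - ((n : ℝ) + 1 + 1) * (a * c ^ (n + 1))
        = c * (a ^ (n + 1) + n * c ^ (n + 1) - ((n : ℝ) + 1) * (a * c ^ n))
          + (a - c) * (a ^ (n + 1) - c ^ (n + 1)) := by ring
    have h3 : 0 ≤ c * (a ^ (n + 1) + n * c ^ (n + 1) - ((n : ℝ) + 1) * (a * c ^ n)) :=
      mul_nonneg hc (by linarith)
    push_cast
    linarith [e.ge, e.le]

lemma basic_aux (N : ℕ) (hN : 1 ≤ N) (b : ℝ → ℝ)
    (hbpos : ∀ r ∈ Ioo (0:ℝ) 1, 0 < b r)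
    (u u' : ℝ → ℝ) (hu'c : ContinuousOn u' (Icc 0 1))
    (hud : ∀ r ∈ Icc (0:ℝ) 1, HasDerivWithinAt u (u' r) (Icc 0 1) r)
    (hueq : ∀ r ∈ Ioo (0:ℝ) 1, HasDerivAt (fun t => (-u' t) ^ N) (b r * (u r) ^ N) r)
    (hub0 : u' 0 = 0) (hub1 : u 1 = 0)
    (hupos : ∀ r ∈ Ioo (0:ℝ) 1, 0 < u r) :
    (∀ r ∈ Ioc (0:ℝ) 1, 0 < -u' r) ∧ MonotoneOn (fun t => -u' t) (Icc 0 1) ∧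
      AntitoneOn u (Icc 0 1) ∧ 0 < u 0 ∧
      (∀ r ∈ Ico (0:ℝ) 1, ∃ c ∈ Ioo r 1, u r = -u' c * (1 - r)) := by
  have hN' : N ≠ 0 := Nat.one_le_iff_ne_zero.mp hN
  have hcu : ContinuousOn u (Icc 0 1) := fun r hr => (hud r hr).continuousWithinAt
  have hUat : ∀ r ∈ Ioo (0:ℝ) 1, HasDerivAt u (u' r) r := fun r hr =>
    (hud r (Ioo_subset_Icc_self hr)).hasDerivAt (Icc_mem_nhds hr.1 hr.2)
  set f : ℝ → ℝ := fun t => (-u' t) ^ N with hf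
  have hcf : ContinuousOn f (Icc 0 1) := hu'c.neg.pow N
  have hmono : StrictMonoOn f (Icc 0 1) := by
    apply strictMonoOn_of_deriv_pos (convex_Icc 0 1) hcf
    rw [interior_Icc]
    intro x hx
    rw [(hueq x hx).deriv]
    exact mul_pos (hbpos x hx) (pow_pos (hupos x hx) N)
  have hf0 : f 0 = 0 := by simp [hf, hub0, zero_pow hN']
  have hfpos : ∀ r ∈ Ioc (0:ℝ) 1, 0 < f r := by
    intro r hr
    have := hmono (left_mem_Icc.mpr zero_le_one) (Ioc_subset_Icc_self hr) hr.1
    rwa [hf0] at this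
  have hvne : ∀ r ∈ Ioc (0:ℝ) 1, -u' r ≠ 0 := by
    intro r hr h
    have := hfpos r hr
    simp only [hf] at this
    rw [h] at this
    simp [zero_pow hN'] at this
  have hcv : ContinuousOn (fun t => -u' t) (Icc 0 1) := hu'c.neg
  have hvpos : ∀ r ∈ Ioc (0:ℝ) 1, 0 < -u' r := by
    by_contra hcon
    push_neg at hcon
    obtain ⟨r, hr, hrle⟩ := hcon
    have hrlt : -u' r < 0 := lt_of_le_of_ne hrle (hvne r hr)
    have hneg : ∀ s ∈ Ioo (0:ℝ) 1, -u' s < 0 := by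
      intro s hs
      rcases lt_trichotomy (-u' s) 0 with h | h | h
      · exact h
      · exact absurd h (hvne s (Ioo_subset_Ioc_self hs))
      · exfalso
        have hsub : uIcc s r ⊆ Ioc (0:ℝ) 1 :=
          Set.ordConnected_Ioc.uIcc_subset (Ioo_subset_Ioc_self hs) hr
        have hmem : (0:ℝ) ∈ uIcc (-u' s) (-u' r) :=
          Set.mem_uIcc.mpr (Or.inr ⟨hrlt.le, h.le⟩)
        obtain ⟨c, hc, hc0⟩ :=
          intermediate_value_uIcc (hcv.mono (hsub.trans Ioc_subset_Icc_self)) hmem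
        exact hvne c (hsub hc) hc0
    have humono : StrictMonoOn u (Icc 0 1) := by
      apply strictMonoOn_of_deriv_pos (convex_Icc 0 1) hcu
      rw [interior_Icc]
      intro x hx
      rw [(hUat x hx).deriv]
      linarith [hneg x hx]
    have h12 : u (1/2 : ℝ) < u 1 :=
      humono (by norm_num) (by norm_num) (by norm_num)
    rw [hub1] at h12
    exact absurd h12 (not_lt.mpr (hupos (1/2) (by norm_num)).le)
  have hvnonneg : ∀ x ∈ Icc (0:ℝ) 1, 0 ≤ -u' x := by
    intro x hx
    rcases eq_or_lt_of_le hx.1 with h | h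
    · simp [← h, hub0]
    · exact (hvpos x ⟨h, hx.2⟩).le
  have hvmono : MonotoneOn (fun t => -u' t) (Icc 0 1) := by
    intro x hx y hy hxy
    exact (pow_le_pow_iff_left₀ (hvnonneg x hx) (hvnonneg y hy) hN').mp
      (hmono.monotoneOn hx hy hxy)
  have hanti : AntitoneOn u (Icc 0 1) := by
    apply antitoneOn_of_deriv_nonpos (convex_Icc 0 1) hcu
    · rw [interior_Icc]
      exact fun x hx => (hUat x hx).differentiableAt.differentiableWithinAt
    · rw [interior_Icc]
      intro x hx
      rw [(hUat x hx).deriv]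
      linarith [hvnonneg x (Ioo_subset_Icc_self hx)]
  have hu0 : 0 < u 0 :=
    lt_of_lt_of_le (hupos (1/2) (by norm_num))
      (hanti (by norm_num) (by norm_num) (by norm_num))
  refine ⟨hvpos, hvmono, hanti, hu0, ?_⟩
  intro r hr
  obtain ⟨c, hc, hceq⟩ := exists_hasDerivAt_eq_slope u u' hr.2
    (hcu.mono (Icc_subset_Icc hr.1 le_rfl))
    (fun x hx => hUat x ⟨lt_of_le_of_lt hr.1 hx.1, hx.2⟩)
  refine ⟨c, hc, ?_⟩
  rw [hub1] at hceq
  have h1r : (0:ℝ) < 1 - r := by linarith [hr.2]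
  field_simp at hceq
  linarith

lemma key_aux (M : ℕ) (b1 b2 : ℝ → ℝ)
    (hb : ∀ r ∈ Ioo (0:ℝ) 1, 0 < b1 r ∧ b1 r ≤ b2 r)
    (u1 u1' u2 u2' : ℝ → ℝ)
    (hu1'c : ContinuousOn u1' (Icc 0 1))
    (hu1d : ∀ r ∈ Icc (0:ℝ) 1, HasDerivWithinAt u1 (u1' r) (Icc 0 1) r)
    (hu1eq : ∀ r ∈ Ioo (0:ℝ) 1,
      HasDerivAt (fun t => (-u1' t) ^ (M + 1)) (b1 r * (u1 r) ^ (M + 1)) r)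
    (hu1b0 : u1' 0 = 0) (hu1b1 : u1 1 = 0)
    (hu2'c : ContinuousOn u2' (Icc 0 1))
    (hu2d : ∀ r ∈ Icc (0:ℝ) 1, HasDerivWithinAt u2 (u2' r) (Icc 0 1) r)
    (hu2eq : ∀ r ∈ Ioo (0:ℝ) 1,
      HasDerivAt (fun t => (-u2' t) ^ (M + 1)) (b2 r * (u2 r) ^ (M + 1)) r)
    (hu2b0 : u2' 0 = 0) (hu2b1 : u2 1 = 0)
    (hu1pos : ∀ r ∈ Ioo (0:ℝ) 1, 0 < u1 r)
    (hu2pos : ∀ r ∈ Ioo (0:ℝ) 1, 0 < u2 r) :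
    (∀ r ∈ Ioo (0:ℝ) 1, b2 r = b1 r) ∧
      ∃ μ : ℝ, 0 < μ ∧ ∀ r ∈ Ioo (0:ℝ) 1, u2 r = μ * u1 r := by
  have hb1pos : ∀ r ∈ Ioo (0:ℝ) 1, 0 < b1 r := fun r hr => (hb r hr).1
  have hb2pos : ∀ r ∈ Ioo (0:ℝ) 1, 0 < b2 r := fun r hr =>
    lt_of_lt_of_le (hb r hr).1 (hb r hr).2
  obtain ⟨hv1pos, hv1mono, hu1anti, hu10, hu1mvt⟩ :=
    basic_aux (M+1) (Nat.le_add_left 1 M) b1 hb1pos u1 u1' hu1'c hu1d hu1eq hu1b0 hu1b1 hu1pos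
  obtain ⟨hv2pos, hv2mono, hu2anti, hu20, hu2mvt⟩ :=
    basic_aux (M+1) (Nat.le_add_left 1 M) b2 hb2pos u2 u2' hu2'c hu2d hu2eq hu2b0 hu2b1 hu2pos
  have hcu1 : ContinuousOn u1 (Icc 0 1) := fun r hr => (hu1d r hr).continuousWithinAt
  have hcu2 : ContinuousOn u2 (Icc 0 1) := fun r hr => (hu2d r hr).continuousWithinAt
  have hu1at : ∀ r ∈ Ioo (0:ℝ) 1, HasDerivAt u1 (u1' r) r := fun r hr =>
    (hu1d r (Ioo_subset_Icc_self hr)).hasDerivAt (Icc_mem_nhds hr.1 hr.2)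
  have hu2at : ∀ r ∈ Ioo (0:ℝ) 1, HasDerivAt u2 (u2' r) r := fun r hr =>
    (hu2d r (Ioo_subset_Icc_self hr)).hasDerivAt (Icc_mem_nhds hr.1 hr.2)
  have hu2ne : ∀ r ∈ Ioo (0:ℝ) 1, u2 r ≠ 0 := fun r hr => ne_of_gt (hu2pos r hr)
  set Q : ℝ → ℝ := fun r =>
    u1 r * (-u1' r) ^ (M+1) - u1 r ^ (M+2) * (-u2' r) ^ (M+1) / u2 r ^ (M+1) with hQdef
  have hQd : ∀ r ∈ Ioo (0:ℝ) 1, HasDerivAt Q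
      ((u1' r * (-u1' r) ^ (M+1) + u1 r * (b1 r * u1 r ^ (M+1)))
        - ((((M:ℝ)+2) * u1 r ^ (M+1) * u1' r * (-u2' r) ^ (M+1)
              + u1 r ^ (M+2) * (b2 r * u2 r ^ (M+1))) * u2 r ^ (M+1)
            - u1 r ^ (M+2) * (-u2' r) ^ (M+1) * (((M:ℝ)+1) * u2 r ^ M * u2' r))
          / (u2 r ^ (M+1)) ^ 2) r := by
    intro r hr
    have h := ((hu1at r hr).mul (hu1eq r hr)).sub
      ((((hu1at r hr).pow (M+2)).mul (hu2eq r hr)).div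
        ((hu2at r hr).pow (M+1)) (pow_ne_zero _ (hu2ne r hr)))
    refine h.congr_deriv ?_
    simp only [Pi.pow_apply, Pi.mul_apply]
    push_cast
    ring
  have hQcont : ContinuousOn Q (Ioo 0 1) := fun x hx =>
    (hQd x hx).continuousAt.continuousWithinAt
  have hQanti : AntitoneOn Q (Ioo 0 1) := by
    apply antitoneOn_of_deriv_nonpos (convex_Ioo 0 1) hQcont
    · rw [interior_Ioo]
      exact fun x hx => (hQd x hx).differentiableAt.differentiableWithinAt
    · rw [interior_Ioo]
      intro x hx
      rw [(hQd x hx).deriv]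
      have h1p := hu1pos x hx
      have h2p := hu2pos x hx
      have hv1p := hv1pos x (Ioo_subset_Ioc_self hx)
      have hv2p := hv2pos x (Ioo_subset_Ioc_self hx)
      have ha : (0:ℝ) ≤ -u1' x * u2 x := (mul_pos hv1p h2p).le
      have hc : (0:ℝ) ≤ u1 x * -u2' x := (mul_pos h1p hv2p).le
      have hY := young_aux (M+1) (-u1' x * u2 x) (u1 x * -u2' x) ha hc
      push_cast at hY
      have hb12 : b1 x ≤ b2 x := (hb x hx).2
      have hnum : (b1 x - b2 x) * (u1 x ^ (M+2) * u2 x ^ (2*M+2))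
          + u2 x ^ M * (((M:ℝ)+2) * ((-u1' x * u2 x) * (u1 x * -u2' x) ^ (M+1))
              - ((-u1' x * u2 x) ^ (M+2) + ((M:ℝ)+1) * (u1 x * -u2' x) ^ (M+2))) ≤ 0 := by
        apply add_nonpos
        · apply mul_nonpos_iff.mpr
          apply Or.inr
          exact ⟨by linarith, (mul_pos (pow_pos h1p _) (pow_pos h2p _)).le⟩
        · apply mul_nonpos_iff.mpr
          apply Or.inl
          exact ⟨(pow_pos h2p M).le, by linarith⟩
      have hrw : (u1' x * (-u1' x) ^ (M+1) + u1 x * (b1 x * u1 x ^ (M+1)))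
          - ((((M:ℝ)+2) * u1 x ^ (M+1) * u1' x * (-u2' x) ^ (M+1)
                + u1 x ^ (M+2) * (b2 x * u2 x ^ (M+1))) * u2 x ^ (M+1)
              - u1 x ^ (M+2) * (-u2' x) ^ (M+1) * (((M:ℝ)+1) * u2 x ^ M * u2' x))
            / (u2 x ^ (M+1)) ^ 2
          = ((b1 x - b2 x) * (u1 x ^ (M+2) * u2 x ^ (2*M+2))
              + u2 x ^ M * (((M:ℝ)+2) * ((-u1' x * u2 x) * (u1 x * -u2' x) ^ (M+1))
                - ((-u1' x * u2 x) ^ (M+2) + ((M:ℝ)+1) * (u1 x * -u2' x) ^ (M+2))))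
            / u2 x ^ (2*M+2) := by
        field_simp
        ring
      rw [hrw]
      exact div_nonpos_of_nonpos_of_nonneg hnum (pow_nonneg h2p.le _)
  haveI hNB0 : (𝓝[Ioo (0:ℝ) 1] (0:ℝ)).NeBot := by
    apply mem_closure_iff_nhdsWithin_neBot.mp
    rw [closure_Ioo (by norm_num : (0:ℝ) ≠ 1)]
    exact ⟨le_rfl, by norm_num⟩
  haveI hNB1 : (𝓝[Ioo (0:ℝ) 1] (1:ℝ)).NeBot := by
    apply mem_closure_iff_nhdsWithin_neBot.mp
    rw [closure_Ioo (by norm_num : (0:ℝ) ≠ 1)]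
    exact ⟨by norm_num, le_rfl⟩
  -- limit at 0
  have h0 : Tendsto Q (𝓝[Ioo (0:ℝ) 1] 0) (𝓝 0) := by
    have hmem : (0:ℝ) ∈ Icc (0:ℝ) 1 := by norm_num
    have hc : ContinuousWithinAt Q (Icc 0 1) 0 := by
      apply ContinuousWithinAt.sub
      · exact (hcu1 0 hmem).mul (((hu1'c 0 hmem).neg).pow (M+1))
      · exact (((hcu1 0 hmem).pow (M+2)).mul (((hu2'c 0 hmem).neg).pow (M+1))).div
          ((hcu2 0 hmem).pow (M+1)) (pow_ne_zero _ (ne_of_gt hu20))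
    have hQ0 : Q 0 = 0 := by
      simp [hQdef, hu1b0, hu2b0, zero_pow (Nat.succ_ne_zero M)]
    have := hc.tendsto
    rw [hQ0] at this
    exact this.mono_left (nhdsWithin_mono 0 Ioo_subset_Icc_self)
  -- limit at 1
  have h1 : Tendsto Q (𝓝[Ioo (0:ℝ) 1] 1) (𝓝 0) := by
    set K : ℝ := (-u1' 1) ^ (M+2)
      + (-u1' 1) ^ (M+2) * (-u2' 1) ^ (M+1) / (-u2' (1/2)) ^ (M+1) with hK
    have hv2h : 0 < -u2' (1/2 : ℝ) := hv2pos (1/2) (by norm_num)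
    have hv11 : 0 < -u1' 1 := hv1pos 1 (by norm_num)
    have hv21 : 0 < -u2' 1 := hv2pos 1 (by norm_num)
    apply squeeze_zero_norm' (a := fun s => K * (1 - s))
    · have hev : ∀ᶠ s in 𝓝[Ioo (0:ℝ) 1] 1, s ∈ Ioo (1/2 : ℝ) 1 := by
        have h₁ : Ioi (1/2 : ℝ) ∈ 𝓝[Ioo (0:ℝ) 1] (1:ℝ) :=
          mem_nhdsWithin_of_mem_nhds (Ioi_mem_nhds (by norm_num))
        have h₂ : Ioo (0:ℝ) 1 ∈ 𝓝[Ioo (0:ℝ) 1] (1:ℝ) := self_mem_nhdsWithin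
        filter_upwards [h₁, h₂] with s hs1 hs2
        exact ⟨hs1, hs2.2⟩
      filter_upwards [hev] with s hs
      have hsI : s ∈ Ioo (0:ℝ) 1 := ⟨by linarith [hs.1], hs.2⟩
      have hs1 : (0:ℝ) < 1 - s := by linarith [hs.2]
      obtain ⟨c1, hc1, he1⟩ := hu1mvt s ⟨hsI.1.le, hsI.2⟩
      obtain ⟨c2, hc2, he2⟩ := hu2mvt s ⟨hsI.1.le, hsI.2⟩
      have hc1I : c1 ∈ Icc (0:ℝ) 1 := ⟨by linarith [hc1.1, hsI.1], hc1.2.le⟩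
      have hc2I : c2 ∈ Icc (0:ℝ) 1 := ⟨by linarith [hc2.1, hsI.1], hc2.2.le⟩
      have hv1c1 : 0 < -u1' c1 := hv1pos c1 ⟨by linarith [hc1.1, hsI.1], hc1.2.le⟩
      have hv2c2 : 0 < -u2' c2 := hv2pos c2 ⟨by linarith [hc2.1, hsI.1], hc2.2.le⟩
      -- bounds
      have hub1' : u1 s ≤ -u1' 1 * (1 - s) := by
        rw [he1]
        exact mul_le_mul_of_nonneg_right
          (hv1mono hc1I (right_mem_Icc.mpr zero_le_one) hc1.2.le) hs1.le
      have hlb2 : -u2' (1/2) * (1 - s) ≤ u2 s := by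
        rw [he2]
        exact mul_le_mul_of_nonneg_right
          (hv2mono (by norm_num) hc2I (by linarith [hc2.1, hs.1])) hs1.le
      have hu1s : 0 < u1 s := hu1pos s hsI
      have hu2s : 0 < u2 s := hu2pos s hsI
      have hv1s : 0 ≤ -u1' s := (hv1pos s (Ioo_subset_Ioc_self hsI)).le
      have hv2s : 0 ≤ -u2' s := (hv2pos s (Ioo_subset_Ioc_self hsI)).le
      have hT1 : u1 s * (-u1' s) ^ (M+1) ≤ (-u1' 1) ^ (M+2) * (1 - s) := by
        have hb : -u1' s ≤ -u1' 1 :=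
          hv1mono (Ioo_subset_Icc_self hsI) (right_mem_Icc.mpr zero_le_one) hsI.2.le
        calc u1 s * (-u1' s) ^ (M+1)
            ≤ (-u1' 1 * (1 - s)) * (-u1' 1) ^ (M+1) :=
              mul_le_mul hub1' (pow_le_pow_left₀ hv1s hb (M+1))
                (pow_nonneg hv1s _) (by positivity)
          _ = (-u1' 1) ^ (M+2) * (1 - s) := by ring
      have hT2 : u1 s ^ (M+2) * (-u2' s) ^ (M+1) / u2 s ^ (M+1)
          ≤ (-u1' 1) ^ (M+2) * (-u2' 1) ^ (M+1) / (-u2' (1/2)) ^ (M+1) * (1 - s) := by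
        have hnum : u1 s ^ (M+2) * (-u2' s) ^ (M+1)
            ≤ (-u1' 1 * (1 - s)) ^ (M+2) * (-u2' 1) ^ (M+1) := by
          apply mul_le_mul
          · exact pow_le_pow_left₀ hu1s.le hub1' (M+2)
          · exact pow_le_pow_left₀ hv2s
              (hv2mono (Ioo_subset_Icc_self hsI) (right_mem_Icc.mpr zero_le_one) hsI.2.le) _
          · exact pow_nonneg hv2s _
          · positivity
        have hden : (-u2' (1/2) * (1 - s)) ^ (M+1) ≤ u2 s ^ (M+1) :=
          pow_le_pow_left₀ (by positivity) hlb2 _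
        calc u1 s ^ (M+2) * (-u2' s) ^ (M+1) / u2 s ^ (M+1)
            ≤ (-u1' 1 * (1 - s)) ^ (M+2) * (-u2' 1) ^ (M+1)
                / (-u2' (1/2) * (1 - s)) ^ (M+1) :=
              div_le_div₀ (by positivity) hnum (by positivity) hden
          _ = (-u1' 1) ^ (M+2) * (-u2' 1) ^ (M+1) / (-u2' (1/2)) ^ (M+1) * (1 - s) := by
              have hne1 : ((1:ℝ) - s) ≠ 0 := ne_of_gt hs1
              have hne2 : (-u2' (1/2 : ℝ)) ≠ 0 := ne_of_gt hv2h
              rw [mul_pow, mul_pow, pow_succ ((1:ℝ) - s) (M+1)]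
              field_simp
      have habs : |Q s| ≤ K * (1 - s) := by
        have hT1n : 0 ≤ u1 s * (-u1' s) ^ (M+1) := by positivity
        have hT2n : 0 ≤ u1 s ^ (M+2) * (-u2' s) ^ (M+1) / u2 s ^ (M+1) := by positivity
        have := abs_sub (u1 s * (-u1' s) ^ (M+1))
          (u1 s ^ (M+2) * (-u2' s) ^ (M+1) / u2 s ^ (M+1))
        calc |Q s| ≤ |u1 s * (-u1' s) ^ (M+1)|
              + |u1 s ^ (M+2) * (-u2' s) ^ (M+1) / u2 s ^ (M+1)| := abs_sub _ _
          _ = u1 s * (-u1' s) ^ (M+1)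
              + u1 s ^ (M+2) * (-u2' s) ^ (M+1) / u2 s ^ (M+1) := by
              rw [abs_of_nonneg hT1n, abs_of_nonneg hT2n]
          _ ≤ K * (1 - s) := by rw [hK]; linarith [hT1, hT2]
      simpa using habs
    · have hcont : Tendsto (fun s : ℝ => K * (1 - s)) (𝓝 1) (𝓝 (K * (1 - 1))) :=
        (continuous_const.mul (continuous_const.sub continuous_id)).tendsto 1
      simp only [sub_self, mul_zero] at hcont
      exact hcont.mono_left nhdsWithin_le_nhds
  -- Q vanishes identically
  have hQ0 : ∀ r ∈ Ioo (0:ℝ) 1, Q r = 0 := by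
    intro r hr
    have hle : Q r ≤ 0 := by
      apply ge_of_tendsto h0
      have h₁ : Iio r ∈ 𝓝[Ioo (0:ℝ) 1] (0:ℝ) :=
        mem_nhdsWithin_of_mem_nhds (Iio_mem_nhds hr.1)
      filter_upwards [h₁, self_mem_nhdsWithin] with s hs1 hs2
      exact hQanti hs2 hr (le_of_lt hs1)
    have hge : 0 ≤ Q r := by
      apply le_of_tendsto h1
      have h₁ : Ioi r ∈ 𝓝[Ioo (0:ℝ) 1] (1:ℝ) :=
        mem_nhdsWithin_of_mem_nhds (Ioi_mem_nhds hr.2)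
      filter_upwards [h₁, self_mem_nhdsWithin] with s hs1 hs2
      exact hQanti hr hs2 (le_of_lt hs1)
    linarith
  -- proportionality of derivatives
  have hprop : ∀ r ∈ Ioo (0:ℝ) 1, -u1' r * u2 r = u1 r * -u2' r := by
    intro r hr
    have h := hQ0 r hr
    have h1p := hu1pos r hr
    have h2p := hu2pos r hr
    have hv1p := hv1pos r (Ioo_subset_Ioc_self hr)
    have hv2p := hv2pos r (Ioo_subset_Ioc_self hr)
    simp only [hQdef, sub_eq_zero] at h
    have hpow : (-u1' r * u2 r) ^ (M+1) = (u1 r * -u2' r) ^ (M+1) := by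
      have h2ne : u2 r ^ (M+1) ≠ 0 := pow_ne_zero _ (ne_of_gt h2p)
      have h1ne : u1 r ≠ 0 := ne_of_gt h1p
      field_simp at h
      rw [mul_pow, mul_pow]
      apply mul_left_cancel₀ h1ne
      linear_combination h
    have := (pow_le_pow_iff_left₀ (mul_pos hv1p h2p).le (mul_pos h1p hv2p).le
      (Nat.succ_ne_zero M)).mp hpow.le
    have h2 := (pow_le_pow_iff_left₀ (mul_pos h1p hv2p).le (mul_pos hv1p h2p).le
      (Nat.succ_ne_zero M)).mp hpow.ge
    linarith
  -- ratio is constant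
  have hratio : ∀ x ∈ Ioo (0:ℝ) 1, HasDerivAt (fun t => u2 t / u1 t) 0 x := by
    intro x hx
    have h := (hu2at x hx).div (hu1at x hx) (ne_of_gt (hu1pos x hx))
    have hz : (u2' x * u1 x - u2 x * u1' x) / u1 x ^ 2 = 0 := by
      have := hprop x hx
      have : u2' x * u1 x - u2 x * u1' x = 0 := by nlinarith [this]
      rw [this, zero_div]
    rwa [hz] at h
  have hconst : ∀ x ∈ Ioo (0:ℝ) 1, ∀ y ∈ Ioo (0:ℝ) 1, x < y →
      u2 x / u1 x = u2 y / u1 y := by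
    intro x hx y hy hxy
    have hsub : Icc x y ⊆ Ioo (0:ℝ) 1 := fun t ht =>
      ⟨lt_of_lt_of_le hx.1 ht.1, lt_of_le_of_lt ht.2 hy.2⟩
    obtain ⟨c, _, hc⟩ := exists_hasDerivAt_eq_slope (fun t => u2 t / u1 t) (fun _ => 0) hxy
      (fun t ht => (hratio t (hsub ht)).continuousAt.continuousWithinAt)
      (fun t ht => hratio t (hsub (Ioo_subset_Icc_self ht)))
    have hyx : (y - x) ≠ 0 := ne_of_gt (by linarith)
    have hc' : (u2 y / u1 y - u2 x / u1 x) / (y - x) = 0 := by simpa using hc.symm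
    have := (div_eq_zero_iff.mp hc').resolve_right hyx
    linarith
  set μ : ℝ := u2 (1/2) / u1 (1/2) with hμdef
  have hμpos : 0 < μ :=
    div_pos (hu2pos (1/2) (by norm_num)) (hu1pos (1/2) (by norm_num))
  have hμeq : ∀ r ∈ Ioo (0:ℝ) 1, u2 r = μ * u1 r := by
    intro r hr
    have hr2 : u2 r / u1 r = μ := by
      rcases lt_trichotomy r (1/2 : ℝ) with h | h | h
      · exact hconst r hr (1/2) (by norm_num) h
      · rw [h]
      · exact (hconst (1/2) (by norm_num) r hr h).symm
    have h1ne : u1 r ≠ 0 := ne_of_gt (hu1pos r hr)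
    field_simp at hr2
    linarith [hr2]
  refine ⟨?_, μ, hμpos, hμeq⟩
  intro r hr
  have hIoonhds : Ioo (0:ℝ) 1 ∈ 𝓝 r := Ioo_mem_nhds hr.1 hr.2
  have hu2'eq : ∀ t ∈ Ioo (0:ℝ) 1, u2' t = μ * u1' t := by
    intro t ht
    have hnt : Ioo (0:ℝ) 1 ∈ 𝓝 t := Ioo_mem_nhds ht.1 ht.2
    have heq : u2 =ᶠ[𝓝 t] (fun s => μ * u1 s) :=
      eventually_of_mem hnt (fun s hs => hμeq s hs)
    have h2' : HasDerivAt u2 (μ * u1' t) t :=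
      ((hu1at t ht).const_mul μ).congr_of_eventuallyEq heq
    exact (hu2at t ht).unique h2'
  have heqf : (fun t => (-u2' t) ^ (M+1)) =ᶠ[𝓝 r]
      (fun t => μ ^ (M+1) * (-u1' t) ^ (M+1)) := by
    apply eventually_of_mem hIoonhds
    intro t ht
    show (-u2' t) ^ (M+1) = μ ^ (M+1) * (-u1' t) ^ (M+1)
    rw [hu2'eq t ht]
    ring
  have hd2 : HasDerivAt (fun t => (-u2' t) ^ (M+1))
      (μ ^ (M+1) * (b1 r * u1 r ^ (M+1))) r :=
    ((hu1eq r hr).const_mul (μ ^ (M+1))).congr_of_eventuallyEq heqf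
  have huniq : b2 r * u2 r ^ (M+1) = μ ^ (M+1) * (b1 r * u1 r ^ (M+1)) :=
    (hu2eq r hr).unique hd2
  rw [hμeq r hr] at huniq
  have hX : (μ * u1 r) ^ (M+1) ≠ 0 :=
    pow_ne_zero _ (ne_of_gt (mul_pos hμpos (hu1pos r hr)))
  have h2 : b2 r * (μ * u1 r) ^ (M+1) = b1 r * (μ * u1 r) ^ (M+1) := by
    rw [mul_pow]
    linear_combination huniq
  exact mul_right_cancel₀ hX h2

lemma sign_aux (u : ℝ → ℝ) (hc : ContinuousOn u (Icc 0 1))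
    (hne : ∀ r ∈ Ioo (0:ℝ) 1, u r ≠ 0) :
    (∀ r ∈ Ioo (0:ℝ) 1, 0 < u r) ∨ (∀ r ∈ Ioo (0:ℝ) 1, 0 < -u r) := by
  have hh : (1/2 : ℝ) ∈ Ioo (0:ℝ) 1 := by norm_num
  rcases (hne _ hh).lt_or_gt with h | h
  · right
    intro r hr
    rcases (hne r hr).lt_or_gt with h' | h'
    · linarith
    · exfalso
      have hsub : uIcc r (1/2 : ℝ) ⊆ Ioo (0:ℝ) 1 :=
        Set.ordConnected_Ioo.uIcc_subset hr hh
      have hmem : (0:ℝ) ∈ uIcc (u r) (u (1/2)) :=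
        Set.mem_uIcc.mpr (Or.inr ⟨h.le, h'.le⟩)
      obtain ⟨c, hcm, hc0⟩ :=
        intermediate_value_uIcc (hc.mono (hsub.trans Ioo_subset_Icc_self)) hmem
      exact hne c (hsub hcm) hc0
  · left
    intro r hr
    rcases (hne r hr).lt_or_gt with h' | h'
    · exfalso
      have hsub : uIcc r (1/2 : ℝ) ⊆ Ioo (0:ℝ) 1 :=
        Set.ordConnected_Ioo.uIcc_subset hr hh
      have hmem : (0:ℝ) ∈ uIcc (u r) (u (1/2)) :=
        Set.mem_uIcc.mpr (Or.inl ⟨h'.le, h.le⟩)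
      obtain ⟨c, hcm, hc0⟩ :=
        intermediate_value_uIcc (hc.mono (hsub.trans Ioo_subset_Icc_self)) hmem
      exact hne c (hsub hcm) hc0
    · exact h'

lemma wrap_aux (M : ℕ) (b1 b2 : ℝ → ℝ)
    (hb : ∀ r ∈ Ioo (0:ℝ) 1, 0 < b1 r ∧ b1 r ≤ b2 r)
    (u1 u1' u2 u2' : ℝ → ℝ)
    (hu1'c : ContinuousOn u1' (Icc 0 1))
    (hu1d : ∀ r ∈ Icc (0:ℝ) 1, HasDerivWithinAt u1 (u1' r) (Icc 0 1) r)
    (hu1eq : ∀ r ∈ Ioo (0:ℝ) 1,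
      HasDerivAt (fun t => (-u1' t) ^ (M+1)) (b1 r * (u1 r) ^ (M+1)) r)
    (hu1b0 : u1' 0 = 0) (hu1b1 : u1 1 = 0)
    (hu2'c : ContinuousOn u2' (Icc 0 1))
    (hu2d : ∀ r ∈ Icc (0:ℝ) 1, HasDerivWithinAt u2 (u2' r) (Icc 0 1) r)
    (hu2eq : ∀ r ∈ Ioo (0:ℝ) 1,
      HasDerivAt (fun t => (-u2' t) ^ (M+1)) (b2 r * (u2 r) ^ (M+1)) r)
    (hu2b0 : u2' 0 = 0) (hu2b1 : u2 1 = 0)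
    (ε1 ε2 : ℝ) (he1 : ε1 = 1 ∨ ε1 = -1) (he2 : ε2 = 1 ∨ ε2 = -1)
    (h1 : ∀ r ∈ Ioo (0:ℝ) 1, 0 < ε1 * u1 r)
    (h2 : ∀ r ∈ Ioo (0:ℝ) 1, 0 < ε2 * u2 r) :
    (∀ r ∈ Ioo (0:ℝ) 1, b2 r = b1 r) ∧
      ∃ μ : ℝ, μ ≠ 0 ∧ ∀ r ∈ Ioo (0:ℝ) 1, u2 r = μ * u1 r := by
  have he1sq : ε1 * ε1 = 1 := by rcases he1 with h | h <;> rw [h] <;> norm_num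
  have he2sq : ε2 * ε2 = 1 := by rcases he2 with h | h <;> rw [h] <;> norm_num
  have he1ne : ε1 ≠ 0 := by rcases he1 with h | h <;> rw [h] <;> norm_num
  have he2ne : ε2 ≠ 0 := by rcases he2 with h | h <;> rw [h] <;> norm_num
  have hmain := key_aux M b1 b2 hb
    (fun r => ε1 * u1 r) (fun r => ε1 * u1' r)
    (fun r => ε2 * u2 r) (fun r => ε2 * u2' r)
    (continuousOn_const.mul hu1'c)
    (fun r hr => (hu1d r hr).const_mul ε1)
    (fun r hr => by
      have h := (hu1eq r hr).const_mul (ε1 ^ (M+1))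
      have heq : (fun t => ε1 ^ (M+1) * (-u1' t) ^ (M+1))
          = (fun t => (-(ε1 * u1' t)) ^ (M+1)) := by funext t; ring
      rw [heq] at h
      refine h.congr_deriv ?_
      ring)
    (by show ε1 * u1' 0 = 0; rw [hu1b0]; ring)
    (by show ε1 * u1 1 = 0; rw [hu1b1]; ring)
    (continuousOn_const.mul hu2'c)
    (fun r hr => (hu2d r hr).const_mul ε2)
    (fun r hr => by
      have h := (hu2eq r hr).const_mul (ε2 ^ (M+1))
      have heq : (fun t => ε2 ^ (M+1) * (-u2' t) ^ (M+1))
          = (fun t => (-(ε2 * u2' t)) ^ (M+1)) := by funext t; ring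
      rw [heq] at h
      refine h.congr_deriv ?_
      ring)
    (by show ε2 * u2' 0 = 0; rw [hu2b0]; ring)
    (by show ε2 * u2 1 = 0; rw [hu2b1]; ring)
    h1 h2
  obtain ⟨hbeq, μ, hμpos, hμe⟩ := hmain
  refine ⟨hbeq, ε1 * ε2 * μ, ?_, ?_⟩
  · exact mul_ne_zero (mul_ne_zero he1ne he2ne) (ne_of_gt hμpos)
  · intro r hr
    have h : ε2 * u2 r = μ * (ε1 * u1 r) := hμe r hr
    calc u2 r = (ε2 * ε2) * u2 r := by rw [he2sq]; ring
      _ = ε2 * (ε2 * u2 r) := by ring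
      _ = ε2 * (μ * (ε1 * u1 r)) := by rw [h]
      _ = ε1 * ε2 * μ * u1 r := by ring


theorem stmt9 (N : ℕ) (hN : 1 ≤ N) (b1 b2 : ℝ → ℝ)
    (hb1c : ContinuousOn b1 (Icc 0 1)) (hb2c : ContinuousOn b2 (Icc 0 1))
    (hb : ∀ r ∈ Ioo (0:ℝ) 1, 0 < b1 r ∧ b1 r ≤ b2 r)
    (u1 u1' u2 u2' : ℝ → ℝ)
    (hu1'c : ContinuousOn u1' (Icc 0 1))
    (hu1d : ∀ r ∈ Icc (0:ℝ) 1, HasDerivWithinAt u1 (u1' r) (Icc 0 1) r)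
    (hu1eq : ∀ r ∈ Ioo (0:ℝ) 1,
      HasDerivAt (fun t => (-u1' t) ^ N) (b1 r * (u1 r) ^ N) r)
    (hu1b0 : u1' 0 = 0) (hu1b1 : u1 1 = 0)
    (hu2'c : ContinuousOn u2' (Icc 0 1))
    (hu2d : ∀ r ∈ Icc (0:ℝ) 1, HasDerivWithinAt u2 (u2' r) (Icc 0 1) r)
    (hu2eq : ∀ r ∈ Ioo (0:ℝ) 1,
      HasDerivAt (fun t => (-u2' t) ^ N) (b2 r * (u2 r) ^ N) r)
    (hu2b0 : u2' 0 = 0) (hu2b1 : u2 1 = 0)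
    (hu1ne : ∀ r ∈ Ioo (0:ℝ) 1, u1 r ≠ 0) :
    (∃ τ ∈ Ioo (0:ℝ) 1, u2 τ = 0) ∨
    ((∀ r ∈ Ioo (0:ℝ) 1, b2 r = b1 r) ∧
     ∃ μ : ℝ, μ ≠ 0 ∧ ∀ᵐ r : ℝ ∂volume, r ∈ Ioo (0:ℝ) 1 → u2 r = μ * u1 r) := by
  by_cases hz : ∃ τ ∈ Ioo (0:ℝ) 1, u2 τ = 0
  · exact Or.inl hz
  right
  push_neg at hz
  obtain ⟨M, rfl⟩ : ∃ M, N = M + 1 := ⟨N - 1, (Nat.succ_pred_eq_of_pos hN).symm⟩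
  have hcu1 : ContinuousOn u1 (Icc 0 1) := fun r hr => (hu1d r hr).continuousWithinAt
  have hcu2 : ContinuousOn u2 (Icc 0 1) := fun r hr => (hu2d r hr).continuousWithinAt
  have hs1 := sign_aux u1 hcu1 hu1ne
  have hs2 := sign_aux u2 hcu2 hz
  have main : (∀ r ∈ Ioo (0:ℝ) 1, b2 r = b1 r) ∧
      ∃ μ : ℝ, μ ≠ 0 ∧ ∀ r ∈ Ioo (0:ℝ) 1, u2 r = μ * u1 r := by
    rcases hs1 with h1 | h1 <;> rcases hs2 with h2 | h2
    · exact wrap_aux M b1 b2 hb u1 u1' u2 u2' hu1'c hu1d hu1eq hu1b0 hu1b1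
        hu2'c hu2d hu2eq hu2b0 hu2b1 1 1 (Or.inl rfl) (Or.inl rfl)
        (fun r hr => by have := h1 r hr; linarith)
        (fun r hr => by have := h2 r hr; linarith)
    · exact wrap_aux M b1 b2 hb u1 u1' u2 u2' hu1'c hu1d hu1eq hu1b0 hu1b1
        hu2'c hu2d hu2eq hu2b0 hu2b1 1 (-1) (Or.inl rfl) (Or.inr rfl)
        (fun r hr => by have := h1 r hr; linarith)
        (fun r hr => by have := h2 r hr; linarith)
    · exact wrap_aux M b1 b2 hb u1 u1' u2 u2' hu1'c hu1d hu1eq hu1b0 hu1b1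
        hu2'c hu2d hu2eq hu2b0 hu2b1 (-1) 1 (Or.inr rfl) (Or.inl rfl)
        (fun r hr => by have := h1 r hr; linarith)
        (fun r hr => by have := h2 r hr; linarith)
    · exact wrap_aux M b1 b2 hb u1 u1' u2 u2' hu1'c hu1d hu1eq hu1b0 hu1b1
        hu2'c hu2d hu2eq hu2b0 hu2b1 (-1) (-1) (Or.inr rfl) (Or.inr rfl)
        (fun r hr => by have := h1 r hr; linarith)
        (fun r hr => by have := h2 r hr; linarith)
  obtain ⟨hbeq, μ, hμ, he⟩ := main
  exact ⟨hbeq, μ, hμ, MeasureTheory.ae_of_all _ (fun r hr => he r hr)⟩
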